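/- Let H₁,…,H_n ≤ 𝔽_p^r be m-generating subspaces with n = 4t(m−1)+1, and let f : 𝔽_p^r → ℂ with Fourier coefficients a_χ = f̂(χ). Write f̂ = ĝ + ε where ĝ has support of size at most t. Then for every character χ_z of 𝔽_p^r, the number of indices i ∈ {1,…,n} with Σ_{χ ∈ χ_z H_i^⊥ \ {χ_z}} |a_χ| ≤ ‖ε‖₁ / t is at least 2t(m−1)+1. -/

import Mathlib

open scoped BigOperators

/-- Lemma 8 of the paper: characters of `𝔽_p^r` are indexed by
`𝔽_p^r` itself via `χ_y(x) = ω_p^{⟨x,y⟩}`; under this indexing the coset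
`χ_z H_i^⊥` corresponds to `{y | ∀ x ∈ H_i, ⟨x, y − z⟩ = 0}`. If `H₁,…,H_n` are
`m`-generating with `n = 4t(m−1)+1`, and `f̂ = ĝ + ε` with `|supp ĝ| ≤ t`, then for
every `z` at least `2t(m−1)+1` indices `i` satisfy
`Σ_{χ_y ∈ χ_z H_i^⊥ \ {χ_z}} |f̂(χ_y)| ≤ ‖ε‖₁/t`. -/
theorem stmt10 {p r t m n : ℕ} [Fact p.Prime] (ht : 1 ≤ t)
    (hn : n = 4 * t * (m - 1) + 1)
    (H : Fin n → Submodule (ZMod p) (Fin r → ZMod p))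
    (hgen : ∀ S : Finset (Fin n), S.card = m → (⨆ i ∈ S, H i) = ⊤)
    (a g ε : (Fin r → ZMod p) → ℂ)
    (hag : a = g + ε)
    (hg : {y | g y ≠ 0}.ncard ≤ t) :
    ∀ z : Fin r → ZMod p,
      2 * t * (m - 1) + 1 ≤
        {i : Fin n |
          (∑ᶠ y ∈ {y : Fin r → ZMod p | y ≠ z ∧ ∀ x ∈ H i, ∑ j, x j * (y j - z j) = 0},
            ‖a y‖) ≤ (∑ y, ‖ε y‖) / t}.ncard := by
  intro z
  classical
  set M := m - 1 with hM
  set ε₁ : ℝ := ∑ y, ‖ε y‖ with hε₁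
  have hε₁0 : 0 ≤ ε₁ := Finset.sum_nonneg fun y _ => norm_nonneg _
  have ht0 : (0 : ℝ) < t := by exact_mod_cast ht
  -- the finsets corresponding to the coset conditions
  set S : Fin n → Finset (Fin r → ZMod p) := fun i =>
    Finset.univ.filter (fun y => y ≠ z ∧ ∀ x ∈ H i, ∑ j, x j * (y j - z j) = 0) with hSdef
  have hSmem : ∀ i y, y ∈ S i ↔ (y ≠ z ∧ ∀ x ∈ H i, ∑ j, x j * (y j - z j) = 0) := by
    intro i y; simp [hSdef]
  have hSet : ∀ i, {y : Fin r → ZMod p | y ≠ z ∧ ∀ x ∈ H i, ∑ j, x j * (y j - z j) = 0}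
      = ↑(S i) := by
    intro i; ext y; simp [hSdef]
  -- multiplicity bound: each y lies in at most M = m-1 of the S i
  have multA : ∀ y : Fin r → ZMod p,
      (Finset.univ.filter (fun i => y ∈ S i)).card ≤ M := by
    intro y
    by_cases hyz : y = z
    · have h0 : (Finset.univ.filter (fun i : Fin n => y ∈ S i)) = ∅ := by
        ext i; simp [hSmem, hyz]
      simp [h0]
    · by_contra hcard
      push_neg at hcard
      have hm : m ≤ (Finset.univ.filter (fun i : Fin n => y ∈ S i)).card := by omega
      obtain ⟨T, hTsub, hTcard⟩ := Finset.exists_subset_card_eq hm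
      have htop := hgen T hTcard
      -- the linear functional x ↦ ∑ j, x j * (y j - z j)
      let L : (Fin r → ZMod p) →ₗ[ZMod p] ZMod p :=
        { toFun := fun x => ∑ j, x j * (y j - z j)
          map_add' := by
            intro u v
            simp [add_mul, Finset.sum_add_distrib]
          map_smul' := by
            intro c v
            simp [Finset.mul_sum, mul_assoc] }
      have hker : (⨆ i ∈ T, H i) ≤ LinearMap.ker L := by
        refine iSup_le fun i => iSup_le fun hi => ?_
        intro x hx
        have hyS : y ∈ S i := (Finset.mem_filter.mp (hTsub hi)).2
        have := ((hSmem i y).mp hyS).2 x hx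
        simpa [L, LinearMap.mem_ker] using this
      rw [htop] at hker
      apply hyz
      funext j
      have hLj : L (Pi.single j 1) = 0 :=
        LinearMap.mem_ker.mp (hker Submodule.mem_top)
      have hcomp : L (Pi.single j 1) = y j - z j := by
        simp only [L, LinearMap.coe_mk, AddHom.coe_mk]
        rw [Finset.sum_eq_single j]
        · simp
        · intro b _ hb; simp [Pi.single_eq_of_ne hb]
        · simp
      rw [hcomp] at hLj
      exact sub_eq_zero.mp hLj
  -- the support of g as a Finset
  set G : Finset (Fin r → ZMod p) := Finset.univ.filter (fun y => g y ≠ 0) with hGdef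
  have hGcard : G.card ≤ t := by
    have : {y : Fin r → ZMod p | g y ≠ 0}.ncard = G.card := by
      rw [Set.ncard_eq_toFinset_card']
      congr 1
      ext y; simp [hGdef]
    omega
  -- bad set 1 : S i meets the support of g
  set B1 : Finset (Fin n) := Finset.univ.filter (fun i => ((S i) ∩ G).Nonempty) with hB1def
  have hB1card : B1.card ≤ t * M := by
    have h1 : B1.card ≤ ∑ i ∈ B1, ((S i) ∩ G).card := by
      calc B1.card = ∑ i ∈ B1, 1 := by simp
        _ ≤ ∑ i ∈ B1, ((S i) ∩ G).card := by
            refine Finset.sum_le_sum fun i hi => ?_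
            have := (Finset.mem_filter.mp hi).2
            exact Finset.card_pos.mpr this
    have h2 : ∑ i ∈ B1, ((S i) ∩ G).card ≤ ∑ i : Fin n, ((S i) ∩ G).card :=
      Finset.sum_le_sum_of_subset (Finset.subset_univ _)
    have h3 : ∑ i : Fin n, ((S i) ∩ G).card
        = ∑ y ∈ G, (Finset.univ.filter (fun i : Fin n => y ∈ S i)).card := by
      have heq : ∀ i, ((S i) ∩ G).card = ∑ y ∈ G, if y ∈ S i then 1 else 0 := by
        intro i
        have h5 : S i ∩ G = G.filter (· ∈ S i) := by
          rw [Finset.filter_mem_eq_inter, Finset.inter_comm]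
        rw [h5, Finset.card_filter]
      calc ∑ i : Fin n, ((S i) ∩ G).card
          = ∑ i : Fin n, ∑ y ∈ G, (if y ∈ S i then 1 else 0) :=
            Finset.sum_congr rfl fun i _ => heq i
        _ = ∑ y ∈ G, ∑ i : Fin n, (if y ∈ S i then 1 else 0) := Finset.sum_comm
        _ = ∑ y ∈ G, (Finset.univ.filter (fun i : Fin n => y ∈ S i)).card :=
            Finset.sum_congr rfl fun y _ => (Finset.card_filter _ _).symm
    have h4 : ∑ y ∈ G, (Finset.univ.filter (fun i : Fin n => y ∈ S i)).card ≤ G.card * M := by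
      calc ∑ y ∈ G, (Finset.univ.filter (fun i : Fin n => y ∈ S i)).card
          ≤ ∑ _y ∈ G, M := Finset.sum_le_sum fun y _ => multA y
        _ = G.card * M := by simp [mul_comm]
    calc B1.card ≤ G.card * M := by omega
      _ ≤ t * M := Nat.mul_le_mul_right _ hGcard
  -- bad set 2 : big ε-mass
  set B2 : Finset (Fin n) :=
    Finset.univ.filter (fun i => ε₁ / t < ∑ y ∈ S i, ‖ε y‖) with hB2def
  have hB2card : B2.card ≤ t * M := by
    rcases B2.eq_empty_or_nonempty with hB2e | hB2ne
    · simp [hB2e]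
    · obtain ⟨i0, hi0⟩ := hB2ne
      have hi0' : ε₁ / t < ∑ y ∈ S i0, ‖ε y‖ := (Finset.mem_filter.mp hi0).2
      have hSle : ∀ i : Fin n, ∑ y ∈ S i, ‖ε y‖ ≤ ε₁ := by
        intro i
        exact Finset.sum_le_sum_of_subset_of_nonneg (Finset.subset_univ _)
          (fun y _ _ => norm_nonneg _)
      have hε₁pos : 0 < ε₁ := by
        have h0 : 0 ≤ ε₁ / t := div_nonneg hε₁0 (le_of_lt ht0)
        have := lt_of_le_of_lt h0 hi0'
        exact lt_of_lt_of_le this (hSle i0)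
      -- double counting with multiplicities
      have hdc : ∑ i : Fin n, ∑ y ∈ S i, ‖ε y‖ ≤ (M : ℝ) * ε₁ := by
        have h1 : ∀ i : Fin n, ∑ y ∈ S i, ‖ε y‖
            = ∑ y, if y ∈ S i then ‖ε y‖ else 0 := by
          intro i
          rw [Finset.sum_ite_mem, Finset.univ_inter]
        calc ∑ i : Fin n, ∑ y ∈ S i, ‖ε y‖
            = ∑ y, ∑ i : Fin n, (if y ∈ S i then ‖ε y‖ else 0) := by
              simp_rw [h1]; rw [Finset.sum_comm]
          _ = ∑ y, ((Finset.univ.filter (fun i : Fin n => y ∈ S i)).card : ℝ)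
                * ‖ε y‖ := by
              refine Finset.sum_congr rfl fun y _ => ?_
              rw [← Finset.sum_filter, Finset.sum_const, nsmul_eq_mul]
          _ ≤ ∑ y, (M : ℝ) * ‖ε y‖ := by
              refine Finset.sum_le_sum fun y _ => ?_
              exact mul_le_mul_of_nonneg_right (by exact_mod_cast multA y)
                (norm_nonneg _)
          _ = (M : ℝ) * ε₁ := by rw [← Finset.mul_sum]
      have hlow : (B2.card : ℝ) * (ε₁ / t) ≤ ∑ i : Fin n, ∑ y ∈ S i, ‖ε y‖ := by
        calc (B2.card : ℝ) * (ε₁ / t) = ∑ _i ∈ B2, ε₁ / t := by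
              simp [mul_comm]
          _ ≤ ∑ i ∈ B2, ∑ y ∈ S i, ‖ε y‖ := by
              refine Finset.sum_le_sum fun i hi => ?_
              exact le_of_lt (Finset.mem_filter.mp hi).2
          _ ≤ ∑ i : Fin n, ∑ y ∈ S i, ‖ε y‖ := by
              refine Finset.sum_le_sum_of_subset_of_nonneg (Finset.subset_univ _) ?_
              intro i _ _
              exact Finset.sum_nonneg fun y _ => norm_nonneg _
      have hfinal : (B2.card : ℝ) ≤ (t : ℝ) * M := by
        have h := le_trans hlow hdc
        rw [div_eq_mul_inv] at h
        have h2 := mul_le_mul_of_nonneg_right h (le_of_lt ht0)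
        have h3 : (B2.card : ℝ) * (ε₁ * (↑t)⁻¹) * t = B2.card * ε₁ := by
          field_simp
        have h4 : (M : ℝ) * ε₁ * t = ((t : ℝ) * M) * ε₁ := by ring
        rw [h3, h4] at h2
        exact le_of_mul_le_mul_right h2 hε₁pos
      exact_mod_cast hfinal
  -- good indices
  set P : Fin n → Prop := fun i => (∑ y ∈ S i, ‖a y‖) ≤ ε₁ / t with hPdef
  have hgood : ∀ i : Fin n, i ∉ B1 → i ∉ B2 → P i := by
    intro i hi1 hi2
    have hgz : ∀ y ∈ S i, g y = 0 := by
      intro y hy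
      by_contra hgy
      exact hi1 (Finset.mem_filter.mpr ⟨Finset.mem_univ _,
        ⟨y, Finset.mem_inter.mpr ⟨hy, Finset.mem_filter.mpr ⟨Finset.mem_univ _, hgy⟩⟩⟩⟩)
    have hsum : (∑ y ∈ S i, ‖a y‖) = ∑ y ∈ S i, ‖ε y‖ := by
      refine Finset.sum_congr rfl fun y hy => ?_
      have : a y = ε y := by rw [hag]; simp [hgz y hy]
      rw [this]
    rw [hPdef]
    simp only
    rw [hsum]
    by_contra hlt
    push_neg at hlt
    exact hi2 (Finset.mem_filter.mpr ⟨Finset.mem_univ _, hlt⟩)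
  -- cardinality count
  have hsubset : Finset.univ \ (B1 ∪ B2) ⊆ Finset.univ.filter P := by
    intro i hi
    rw [Finset.mem_sdiff, Finset.mem_union] at hi
    push_neg at hi
    exact Finset.mem_filter.mpr ⟨Finset.mem_univ _, hgood i hi.2.1 hi.2.2⟩
  have hcard1 : n - (B1.card + B2.card) ≤ (Finset.univ \ (B1 ∪ B2)).card := by
    have h1 : (Finset.univ \ (B1 ∪ B2)).card
        = n - (B1 ∪ B2).card := by
      rw [Finset.card_sdiff_of_subset (Finset.subset_univ _)]
      simp
    have h2 : (B1 ∪ B2).card ≤ B1.card + B2.card := Finset.card_union_le _ _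
    omega
  have hcard2 : 2 * t * M + 1 ≤ (Finset.univ.filter P).card := by
    have hc := Finset.card_le_card hsubset
    have hn' : n = 4 * (t * M) + 1 := by rw [hn]; ring
    have hgoal : 2 * t * M = 2 * (t * M) := by ring
    rw [hgoal]
    omega
  -- convert ncard of the goal set
  have hconv : {i : Fin n |
      (∑ᶠ y ∈ {y : Fin r → ZMod p | y ≠ z ∧ ∀ x ∈ H i, ∑ j, x j * (y j - z j) = 0},
        ‖a y‖) ≤ (∑ y, ‖ε y‖) / t}
      = ↑(Finset.univ.filter P) := by
    ext i
    rw [Set.mem_setOf_eq, hSet i, finsum_mem_coe_finset]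
    simp only [Finset.mem_coe, Finset.mem_filter, Finset.mem_univ, true_and]
    exact Iff.rfl
  rw [hconv, Set.ncard_coe_finset]
  exact hcard2
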